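/- Let G̃ be the graph on 16 vertices obtained from the complete bipartite graph K_{4,4} by attaching one pendant vertex to each of its 8 vertices. Then G̃ is P_6-free and b(G̃) = 4 = ⌈(6+1)/2⌉; hence the bound b(G) ≤ ⌈(k+1)/2⌉ for connected P_k-free graphs is tight for k = 6. -/

import Mathlib

open SimpleGraph

/-- `b` is a burning sequence of length `k` for `G`: the source `b i` is burned at time `i + 1`
(for `i : Fin k`), and every vertex must be within distance `k - (i + 1)` of some source `b i`
(expressed via the existence of a short enough walk, so that unreachable vertices are never
considered burned). -/
def IsBurningSeq {V : Type*} (G : SimpleGraph V) {k : ℕ} (b : Fin k → V) : Prop :=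
  ∀ v : V, ∃ i : Fin k, ∃ w : G.Walk v (b i), w.length + (i : ℕ) + 1 ≤ k

/-- The burning number of `G`: the least `k` admitting a burning sequence of length `k`. -/
noncomputable def burningNumber {V : Type*} (G : SimpleGraph V) : ℕ :=
  sInf {k : ℕ | ∃ b : Fin k → V, IsBurningSeq G b}

/-- The graph `G̃`: the complete bipartite graph `K_{4,4}` with one pendant vertex attached
to each of its `8` vertices. The original vertices are `Sum.inl x` and the pendant vertex
attached to `x` is `Sum.inr x`. -/
def Gtilde : SimpleGraph ((Fin 4 ⊕ Fin 4) ⊕ (Fin 4 ⊕ Fin 4)) :=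
  SimpleGraph.fromRel (fun x y =>
    match x, y with
    | Sum.inl u, Sum.inl v => (completeBipartiteGraph (Fin 4) (Fin 4)).Adj u v
    | Sum.inl v, Sum.inr w => v = w
    | _, _ => False)


abbrev VT := (Fin 4 ⊕ Fin 4) ⊕ (Fin 4 ⊕ Fin 4)

lemma adj_inl_inl {a b : Fin 4 ⊕ Fin 4} :
    Gtilde.Adj (Sum.inl a) (Sum.inl b) ↔ a.isLeft ≠ b.isLeft := by
  rw [Gtilde, SimpleGraph.fromRel_adj]
  cases a <;> cases b <;> simp_all

lemma adj_inr {x : Fin 4 ⊕ Fin 4} {u : VT} :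
    Gtilde.Adj (Sum.inr x) u ↔ u = Sum.inl x := by
  rw [Gtilde, SimpleGraph.fromRel_adj]
  cases u with
  | inl a => simp
  | inr a => simp

lemma adj_inl {a : Fin 4 ⊕ Fin 4} {u : VT} :
    Gtilde.Adj (Sum.inl a) u ↔ u = Sum.inr a ∨ ∃ b, u = Sum.inl b ∧ a.isLeft ≠ b.isLeft := by
  cases u with
  | inl b => rw [adj_inl_inl]; simp
  | inr b => rw [Gtilde.adj_comm, adj_inr]; aesop

/-- anchor of a vertex -/
def anc : VT → Fin 4 ⊕ Fin 4 := Sum.elim id id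

lemma ball1 {x : Fin 4 ⊕ Fin 4} {u : VT} (w : Gtilde.Walk (Sum.inr x) u)
    (h : w.length ≤ 1) : anc u = x := by
  cases w with
  | nil => rfl
  | cons hadj p =>
    rw [adj_inr] at hadj
    subst hadj
    cases p with
    | nil => rfl
    | cons h2 q => simp [Walk.length_cons] at h

lemma ball2 {x : Fin 4 ⊕ Fin 4} {u : VT} (w : Gtilde.Walk (Sum.inr x) u)
    (h : w.length ≤ 2) : anc u = x ∨ (anc u).isLeft ≠ x.isLeft := by
  cases w with
  | nil => exact Or.inl rfl
  | cons hadj p =>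
    rw [adj_inr] at hadj
    subst hadj
    cases p with
    | nil => exact Or.inl rfl
    | cons h2 q =>
      cases q with
      | nil =>
        rw [adj_inl] at h2
        rcases h2 with rfl | ⟨b, rfl, hb⟩
        · exact Or.inl rfl
        · exact Or.inr fun hc => hb (by simpa [anc] using hc.symm)
      | cons h3 r => simp [Walk.length_cons] at h

lemma no_burn3 (b : Fin 3 → VT) : ¬ IsBurningSeq Gtilde b := by
  intro hb
  have key : ∀ a0 a1 a2 : Fin 4 ⊕ Fin 4,
      ∃ x : Fin 4 ⊕ Fin 4, x.isLeft = a0.isLeft ∧ x ≠ a0 ∧ x ≠ a1 ∧ x ≠ a2 := by decide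
  obtain ⟨x, hs, h0, h1, h2⟩ := key (anc (b 0)) (anc (b 1)) (anc (b 2))
  obtain ⟨i, w, hw⟩ := hb (Sum.inr x)
  fin_cases i
  · simp only [Fin.val_zero] at hw
    rcases ball2 w (by omega) with h | h
    · exact h0 h.symm
    · exact h (hs ▸ rfl)
  · simp only [Fin.val_one] at hw
    exact h1 (ball1 w (by omega)).symm
  · simp only [Fin.val_two] at hw
    exact h2 (ball1 w (by omega)).symm

lemma mem4 : ∃ b : Fin 4 → VT, IsBurningSeq Gtilde b := by
  refine ⟨fun _ => Sum.inl (Sum.inl 0), fun v => ⟨0, ?_⟩⟩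
  have e1 : ∀ a : Fin 4, Gtilde.Adj (Sum.inl (Sum.inl a)) (Sum.inl (Sum.inr 0)) :=
    fun a => adj_inl_inl.mpr (by simp)
  have e2 : Gtilde.Adj (Sum.inl (Sum.inr 0)) (Sum.inl (Sum.inl 0)) :=
    adj_inl_inl.mpr (by simp)
  have e3 : ∀ c : Fin 4, Gtilde.Adj (Sum.inl (Sum.inr c)) (Sum.inl (Sum.inl 0)) :=
    fun c => adj_inl_inl.mpr (by simp)
  have e4 : ∀ y : Fin 4 ⊕ Fin 4, Gtilde.Adj (Sum.inr y) (Sum.inl y) := fun y => adj_inr.mpr rfl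
  rcases v with (a | c) | (a | c)
  · exact ⟨Walk.cons (e1 a) (Walk.cons e2 Walk.nil), by simp⟩
  · exact ⟨Walk.cons (e3 c) Walk.nil, by simp⟩
  · exact ⟨Walk.cons (e4 (Sum.inl a)) (Walk.cons (e1 a) (Walk.cons e2 Walk.nil)), by simp⟩
  · exact ⟨Walk.cons (e4 (Sum.inr c)) (Walk.cons (e3 c) Walk.nil), by simp⟩

lemma bn4 : burningNumber Gtilde = 4 := by
  have h4 : 4 ∈ {k : ℕ | ∃ b : Fin k → VT, IsBurningSeq Gtilde b} := mem4
  have hge : ∀ k ∈ {k : ℕ | ∃ b : Fin k → VT, IsBurningSeq Gtilde b}, 4 ≤ k := by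
    intro k hk
    by_contra hlt
    push_neg at hlt
    obtain ⟨b, hb⟩ := hk
    rcases Nat.eq_zero_or_pos k with rfl | hpos
    · obtain ⟨i, -, -⟩ := hb (Sum.inl (Sum.inl 0))
      exact i.elim0
    · apply no_burn3 (fun i : Fin 3 => if h : (i : ℕ) < k then b ⟨i, h⟩ else b ⟨0, hpos⟩)
      intro v
      obtain ⟨i, w, hw⟩ := hb v
      have hik : (i : ℕ) < 3 := lt_of_lt_of_le i.isLt (by omega)
      refine ⟨⟨i, hik⟩, ?_⟩
      have heq : (if h : ((⟨(i : ℕ), hik⟩ : Fin 3) : ℕ) < k then b ⟨_, h⟩ else b ⟨0, hpos⟩)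
          = b i := by simp [i.isLt]
      refine ⟨w.copy rfl heq.symm, ?_⟩
      have h' : ((⟨(i : ℕ), hik⟩ : Fin 3) : ℕ) = (i : ℕ) := rfl
      rw [Walk.length_copy, h']
      omega
  exact le_antisymm (Nat.sInf_le h4) (le_csInf ⟨4, h4⟩ hge)

lemma mid {u v1 v2 : VT} (h1 : Gtilde.Adj v1 u) (h2 : Gtilde.Adj v2 u) (hne : v1 ≠ v2) :
    ∃ a, u = Sum.inl a := by
  cases u with
  | inl a => exact ⟨a, rfl⟩
  | inr x =>
    rw [Gtilde.adj_comm, adj_inr] at h1 h2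
    exact absurd (h1.trans h2.symm) hne

lemma p6free : IsEmpty (pathGraph 6 ↪g Gtilde) := by
  refine ⟨fun f => ?_⟩
  have hadj : ∀ i j : Fin 6, (pathGraph 6).Adj i j → Gtilde.Adj (f i) (f j) :=
    fun i j h => f.map_rel_iff.mpr h
  have pa : ∀ i j : Fin 6, (i : ℕ) + 1 = (j : ℕ) → (pathGraph 6).Adj i j := by
    intro i j h; rw [pathGraph_adj]; exact Or.inl h
  have a01 := hadj 0 1 (pa 0 1 rfl)
  have a12 := hadj 1 2 (pa 1 2 rfl)
  have a23 := hadj 2 3 (pa 2 3 rfl)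
  have a34 := hadj 3 4 (pa 3 4 rfl)
  have a45 := hadj 4 5 (pa 4 5 rfl)
  obtain ⟨x1, e1⟩ := mid a01 (Gtilde.adj_symm a12) (f.injective.ne (by decide : (0 : Fin 6) ≠ 2))
  obtain ⟨x2, e2⟩ := mid a12 (Gtilde.adj_symm a23) (f.injective.ne (by decide : (1 : Fin 6) ≠ 3))
  obtain ⟨x3, e3⟩ := mid a23 (Gtilde.adj_symm a34) (f.injective.ne (by decide : (2 : Fin 6) ≠ 4))
  obtain ⟨x4, e4⟩ := mid a34 (Gtilde.adj_symm a45) (f.injective.ne (by decide : (3 : Fin 6) ≠ 5))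
  rw [e1, e2] at a12
  rw [e2, e3] at a23
  rw [e3, e4] at a34
  rw [adj_inl_inl] at a12 a23 a34
  have h14 : x1.isLeft ≠ x4.isLeft := by
    cases hb1 : x1.isLeft <;> cases hb2 : x2.isLeft <;> cases hb3 : x3.isLeft <;>
      cases hb4 : x4.isLeft <;> simp_all
  have : (pathGraph 6).Adj 1 4 := f.map_rel_iff.mp (by rw [e1, e4]; exact adj_inl_inl.mpr h14)
  rw [pathGraph_adj] at this
  revert this; decide

/-- `G̃` is `P_6`-free and `b(G̃) = 4 = ⌈(6 + 1) / 2⌉`: the bound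
`b(G) ≤ ⌈(k + 1) / 2⌉` for connected `P_k`-free graphs is tight for `k = 6`. -/
theorem Gtilde_pathFree_and_burningNumber :
    IsEmpty (pathGraph 6 ↪g Gtilde) ∧ burningNumber Gtilde = 4 := by
  exact ⟨p6free, bn4⟩
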